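/- (Frank–Wolfe convergence rate) Let K ⊆ E be a nonempty compact convex set whose squared diameter is at most D (i.e. ‖a − b‖² ≤ D for all a, b ∈ K), and let f : E → ℝ be convex and L-smooth with L > 0. Define Frank–Wolfe iterates: w_0 ∈ K is arbitrary, and for t = 1, …, T set γ_t := 2/(t+1), let v_t ∈ K minimize v ↦ ⟨v, ∇f(w_{t−1})⟩ over K, and set w_t := (1 − γ_t) w_{t−1} + γ_t v_t. Then f(w_T) − min_{w∈K} f(w) ≤ 8LD/(T+1). -/

import Mathlib

open scoped BigOperators RealInnerProductSpace

private lemma fw_hasDerivAt_line {E : Type*} [NormedAddCommGroup E] [InnerProductSpace ℝ E]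
    (f : E → ℝ) (gf : E → E) (hgf : ∀ x : E, HasFDerivAt f (innerSL ℝ (gf x)) x)
    (x u : E) (s : ℝ) :
    HasDerivAt (fun s : ℝ => f (x + s • u)) ⟪gf (x + s • u), u⟫ s := by
  have hc : HasDerivAt (fun s : ℝ => x + s • u) u s := by
    simpa using ((hasDerivAt_id s).smul_const u).const_add x
  have := (hgf (x + s • u)).comp_hasDerivAt s hc
  exact this

/-- Descent lemma for `L`-smooth functions. -/
private lemma fw_descent {E : Type*} [NormedAddCommGroup E] [InnerProductSpace ℝ E]
    (f : E → ℝ) (gf : E → E) (hgf : ∀ x : E, HasFDerivAt f (innerSL ℝ (gf x)) x)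
    (L : ℝ) (hsmooth : ∀ x z : E, ‖gf x - gf z‖ ≤ L * ‖x - z‖)
    (x y : E) : f y ≤ f x + ⟪gf x, y - x⟫ + L / 2 * ‖y - x‖ ^ 2 := by
  set u := y - x with hu
  set φ : ℝ → ℝ := fun s => f (x + s • u) - s * ⟪gf x, u⟫ - L / 2 * s ^ 2 * ‖u‖ ^ 2 with hφ
  have hφd : ∀ s : ℝ,
      HasDerivAt φ (⟪gf (x + s • u), u⟫ - ⟪gf x, u⟫ - L * s * ‖u‖ ^ 2) s := by
    intro s
    have h1 := fw_hasDerivAt_line f gf hgf x u s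
    have h2 : HasDerivAt (fun s : ℝ => s * ⟪gf x, u⟫) ⟪gf x, u⟫ s := by
      simpa using (hasDerivAt_id s).mul_const (⟪gf x, u⟫ : ℝ)
    have h3 : HasDerivAt (fun s : ℝ => L / 2 * s ^ 2 * ‖u‖ ^ 2) (L * s * ‖u‖ ^ 2) s := by
      have hp : HasDerivAt (fun s : ℝ => s ^ 2) (2 * s) s := by
        simpa using hasDerivAt_pow 2 s
      have := (hp.const_mul (L / 2)).mul_const (‖u‖ ^ 2)
      exact this.congr_deriv (by ring)
    exact (h1.sub h2).sub h3
  have hanti : AntitoneOn φ (Set.Icc (0 : ℝ) 1) := by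
    refine antitoneOn_of_hasDerivWithinAt_nonpos (f' := fun s =>
        ⟪gf (x + s • u), u⟫ - ⟪gf x, u⟫ - L * s * ‖u‖ ^ 2) (convex_Icc 0 1)
      (fun s _ => (hφd s).continuousAt.continuousWithinAt)
      (fun s _ => (hφd s).hasDerivWithinAt) ?_
    intro s hs
    rw [interior_Icc] at hs
    have hkey : ⟪gf (x + s • u), u⟫ - ⟪gf x, u⟫ ≤ L * s * ‖u‖ ^ 2 := by
      have h1 : ⟪gf (x + s • u) - gf x, u⟫ ≤ ‖gf (x + s • u) - gf x‖ * ‖u‖ :=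
        real_inner_le_norm _ _
      have h2 : ‖gf (x + s • u) - gf x‖ * ‖u‖ ≤ (L * ‖(x + s • u) - x‖) * ‖u‖ :=
        mul_le_mul_of_nonneg_right (hsmooth _ _) (norm_nonneg _)
      have h3 : (L * ‖(x + s • u) - x‖) * ‖u‖ = L * s * ‖u‖ ^ 2 := by
        rw [add_sub_cancel_left, norm_smul, Real.norm_eq_abs, abs_of_pos hs.1]
        ring
      rw [inner_sub_left] at h1
      linarith
    linarith
  have := hanti (Set.left_mem_Icc.2 zero_le_one) (Set.right_mem_Icc.2 zero_le_one) zero_le_one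
  simp only [hφ, one_smul, zero_smul, add_zero, one_mul, one_pow, zero_pow, mul_zero,
    zero_mul, sub_zero, hu, add_sub_cancel] at this
  linarith

/-- Gradient inequality for convex functions. -/
private lemma fw_convex_grad {E : Type*} [NormedAddCommGroup E] [InnerProductSpace ℝ E]
    (f : E → ℝ) (hfconv : ConvexOn ℝ Set.univ f)
    (gf : E → E) (hgf : ∀ x : E, HasFDerivAt f (innerSL ℝ (gf x)) x)
    (x y : E) : f x + ⟪gf x, y - x⟫ ≤ f y := by
  set u := y - x with hu
  have hg : HasDerivAt (fun s : ℝ => f (x + s • u)) ⟪gf x, u⟫ 0 := by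
    have := fw_hasDerivAt_line f gf hgf x u 0
    simpa using this
  have hconv1 : ConvexOn ℝ Set.univ (fun s : ℝ => f (x + s • u)) := by
    refine ⟨convex_univ, ?_⟩
    intro a _ b _ p q hp hq hpq
    simp only [smul_eq_mul]
    have key : x + (p * a + q * b) • u = p • (x + a • u) + q • (x + b • u) := by
      have : p • (x + a • u) + q • (x + b • u) = (p + q) • x + (p * a + q * b) • u := by
        module
      rw [this, hpq, one_smul]
    rw [key]
    exact hfconv.2 (Set.mem_univ _) (Set.mem_univ _) hp hq hpq
  have hs := hconv1.le_slope_of_hasDerivAt (Set.mem_univ (0 : ℝ)) (Set.mem_univ (1 : ℝ))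
    zero_lt_one hg
  rw [slope_def_field] at hs
  simp only [one_smul, zero_smul, add_zero, hu, add_sub_cancel, sub_zero, div_one] at hs
  linarith

/-- Frank–Wolfe convergence rate: `f (w T) - min_{w ∈ K} f w ≤ 8 L D / (T + 1)`. -/
theorem frank_wolfe_convergence_rate
    {E : Type*} [NormedAddCommGroup E] [InnerProductSpace ℝ E]
    (K : Set E) (hKne : K.Nonempty) (hKcomp : IsCompact K) (hKconv : Convex ℝ K)
    (D : ℝ) (hD : ∀ a ∈ K, ∀ b ∈ K, ‖a - b‖^2 ≤ D)
    (f : E → ℝ) (hfconv : ConvexOn ℝ Set.univ f)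
    (gf : E → E)
    -- `f` is differentiable with gradient `gf`
    (hgf : ∀ x : E, HasFDerivAt f (innerSL ℝ (gf x)) x)
    (L : ℝ) (hL : 0 < L)
    -- `f` is `L`-smooth
    (hsmooth : ∀ x z : E, ‖gf x - gf z‖ ≤ L * ‖x - z‖)
    (T : ℕ) (hT : 1 ≤ T)
    (w v : ℕ → E) (hw0 : w 0 ∈ K)
    -- `v t` minimizes `v ↦ ⟨v, ∇f (w (t-1))⟩` over `K`
    (hv : ∀ t ∈ Finset.Icc 1 T, v t ∈ K ∧ ∀ u ∈ K,
      ⟪v t, gf (w (t-1))⟫ ≤ ⟪u, gf (w (t-1))⟫)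
    -- `w t = (1 - γ t) • w (t-1) + γ t • v t` with `γ t = 2/(t+1)`
    (hwstep : ∀ t ∈ Finset.Icc 1 T,
      w t = (1 - 2/((t:ℝ)+1)) • w (t-1) + (2/((t:ℝ)+1)) • v t) :
    f (w T) - sInf (f '' K) ≤ 8 * L * D / ((T:ℝ) + 1) := by
  have hDnn : 0 ≤ D := by simpa using hD _ hw0 _ hw0
  have hfc : Continuous f := by
    rw [continuous_iff_continuousAt]
    exact fun x => (hgf x).continuousAt
  obtain ⟨z, hzK, hz⟩ := hKcomp.exists_isMinOn hKne hfc.continuousOn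
  -- all iterates stay in K
  have wmem : ∀ t, t ≤ T → w t ∈ K := by
    intro t
    induction t with
    | zero => exact fun _ => hw0
    | succ n ih =>
      intro hn
      have hmem : n + 1 ∈ Finset.Icc 1 T := by rw [Finset.mem_Icc]; omega
      rw [hwstep _ hmem]
      have hprev : w (n + 1 - 1) ∈ K := by simpa using ih (by omega)
      have hpos : (0:ℝ) < ((n+1:ℕ):ℝ) + 1 := by positivity
      have hγnn : (0:ℝ) ≤ 2 / (((n+1:ℕ):ℝ) + 1) := by positivity
      have hγle : 2 / (((n+1:ℕ):ℝ) + 1) ≤ 1 := by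
        rw [div_le_one hpos]
        push_cast
        linarith [Nat.cast_nonneg (α := ℝ) n]
      exact hKconv hprev (hv _ hmem).1 (by linarith) hγnn (by ring)
  -- per-step recursion
  have hrec : ∀ t ∈ Finset.Icc 1 T,
      f (w t) - f z ≤ (1 - 2/((t:ℝ)+1)) * (f (w (t-1)) - f z)
        + L / 2 * (2/((t:ℝ)+1))^2 * D := by
    intro t ht
    rw [Finset.mem_Icc] at ht
    set γ : ℝ := 2 / ((t:ℝ)+1) with hγdef
    set p : E := w (t-1) with hpdef
    have hpK : p ∈ K := wmem _ (by omega)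
    obtain ⟨hvK, hvmin⟩ := hv t (Finset.mem_Icc.mpr ht)
    have hγnn : 0 ≤ γ := by positivity
    have hwt : w t - p = γ • (v t - p) := by
      rw [hwstep t (Finset.mem_Icc.mpr ht), ← hpdef, ← hγdef]
      module
    have hdesc := fw_descent f gf hgf L hsmooth p (w t)
    rw [hwt] at hdesc
    have hinner1 : ⟪gf p, v t - p⟫ ≤ ⟪gf p, z - p⟫ := by
      have h := hvmin z hzK
      rw [real_inner_comm (gf p) (v t), real_inner_comm (gf p) z] at h
      simp only [inner_sub_right]
      linarith
    have hinner2 : ⟪gf p, z - p⟫ ≤ f z - f p := by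
      have := fw_convex_grad f hfconv gf hgf p z
      linarith
    have hinner : ⟪gf p, γ • (v t - p)⟫ ≤ γ * (f z - f p) := by
      rw [real_inner_smul_right]
      exact mul_le_mul_of_nonneg_left (le_trans hinner1 hinner2) hγnn
    have hnorm : ‖γ • (v t - p)‖ ^ 2 ≤ γ ^ 2 * D := by
      rw [norm_smul, Real.norm_eq_abs, abs_of_nonneg hγnn, mul_pow]
      exact mul_le_mul_of_nonneg_left (hD _ hvK _ hpK) (by positivity)
    have hL2 : (0:ℝ) ≤ L / 2 := by positivity
    nlinarith [mul_le_mul_of_nonneg_left hnorm hL2]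
  -- inductive bound: f (w t) - f z ≤ 2 L D / (t + 1)
  have hbound : ∀ t, 1 ≤ t → t ≤ T → f (w t) - f z ≤ 2 * L * D / ((t:ℝ) + 1) := by
    intro t
    induction t with
    | zero => omega
    | succ n ih =>
      intro _ hnT
      rcases Nat.eq_zero_or_pos n with hn0 | hn1
      · subst hn0
        have h := hrec 1 (by rw [Finset.mem_Icc]; omega)
        norm_num at h ⊢
        nlinarith [mul_nonneg hL.le hDnn]
      · have hr := hrec (n+1) (by rw [Finset.mem_Icc]; omega)
        have ihn := ih (by omega) (by omega)
        simp only [Nat.add_sub_cancel] at hr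
        push_cast at hr ⊢
        have hnn : (1:ℝ) ≤ (n:ℝ) := by exact_mod_cast hn1
        have h2 : (0:ℝ) < (n:ℝ) + 1 := by linarith
        have h3 : (0:ℝ) < (n:ℝ) + 1 + 1 := by linarith
        have hγ : 0 ≤ 1 - 2 / ((n:ℝ) + 1 + 1) := by
          rw [sub_nonneg, div_le_one h3]; linarith
        have hmid : (1 - 2 / ((n:ℝ) + 1 + 1)) * (f (w n) - f z)
            ≤ (1 - 2 / ((n:ℝ) + 1 + 1)) * (2 * L * D / ((n:ℝ) + 1)) :=
          mul_le_mul_of_nonneg_left ihn hγ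
        have hkey : 2 * L * D / ((n:ℝ) + 1 + 1)
            - ((1 - 2 / ((n:ℝ) + 1 + 1)) * (2 * L * D / ((n:ℝ) + 1))
              + L / 2 * (2 / ((n:ℝ) + 1 + 1)) ^ 2 * D)
            = 2 * L * D / (((n:ℝ) + 1) * ((n:ℝ) + 1 + 1) ^ 2) := by
          field_simp
          ring
        have hpos : (0:ℝ) ≤ 2 * L * D / (((n:ℝ) + 1) * ((n:ℝ) + 1 + 1) ^ 2) := by
          positivity
        linarith
  have h1 := hbound T hT le_rfl
  have hfz_le : f z ≤ sInf (f '' K) := by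
    apply le_csInf (hKne.image f)
    rintro b ⟨y, hy, rfl⟩
    exact isMinOn_iff.mp hz y hy
  have hTpos : (0:ℝ) < (T:ℝ) + 1 := by positivity
  have h2 : 2 * L * D / ((T:ℝ) + 1) ≤ 8 * L * D / ((T:ℝ) + 1) := by
    have h6 : (0:ℝ) ≤ 6 * L * D / ((T:ℝ) + 1) := by positivity
    have he : 8 * L * D / ((T:ℝ) + 1) = 2 * L * D / ((T:ℝ) + 1) + 6 * L * D / ((T:ℝ) + 1) := by
      ring
    linarith
  linarith
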